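/- arXiv:1305.4267 — 3 statements merged into one kernel-verified Lean document; each statement's English description precedes it below -/
import Mathlib

section
/- For every cube Q in ℝⁿ there exists a shift parameter t ∈ {0, 1/3}ⁿ and a cube Q_t belonging to the shifted dyadic grid 𝒟_t = {2^{-k}([0,1)ⁿ + m + (-1)^k t) : k ∈ ℤ, m ∈ ℤⁿ} such that Q ⊆ Q_t and the side length of Q_t is at most 6 times the side length of Q. -/
open MeasureTheory ENNReal Set
open scoped BigOperators

noncomputable section

abbrev Rn (n : ℕ) := Fin n → ℝ

/-- An axis-parallel half-open cube with corner `c` and side length `l`. -/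
def cube {n : ℕ} (c : Rn n) (l : ℝ) : Set (Rn n) :=
  {x | ∀ i, c i ≤ x i ∧ x i < c i + l}

/-- `σ(Q) = ∫_Q σ dx`. -/
def wtI {n : ℕ} (σ : Rn n → ℝ≥0∞) (Q : Set (Rn n)) : ℝ≥0∞ := ∫⁻ x in Q, σ x

/-- `𝔼^σ_Q f = σ(Q)⁻¹ ∫_Q f σ`. -/
def avgE {n : ℕ} (σ f : Rn n → ℝ≥0∞) (Q : Set (Rn n)) : ℝ≥0∞ :=
  (wtI σ Q)⁻¹ * ∫⁻ x in Q, f x * σ x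

/-- The cube `2^{-k}([0,1)ⁿ + m + (-1)^k t)` of the shifted dyadic grid. -/
def gridCube (n : ℕ) (k : ℤ) (m : Fin n → ℤ) (t : Fin n → ℝ) : Set (Rn n) :=
  {x | ∀ i, (2:ℝ) ^ (-k) * ((m i : ℝ) + (-1:ℝ) ^ k * t i) ≤ x i ∧
       x i < (2:ℝ) ^ (-k) * ((m i : ℝ) + (-1:ℝ) ^ k * t i + 1)}

/-- The shifted dyadic grid `𝒟_t`. -/
def shiftedGrid (n : ℕ) (t : Fin n → ℝ) : Set (Set (Rn n)) :=
  {Q | ∃ (k : ℤ) (m : Fin n → ℤ), Q = gridCube n k m t}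

/-- Abstract dyadic grid: cubes of dyadic side lengths, nested or disjoint,
and for each scale the cubes of that side length cover `ℝⁿ`. -/
def IsDyadicGrid {n : ℕ} (𝒟 : Set (Set (Rn n))) : Prop :=
  (∀ Q ∈ 𝒟, ∃ (c : Rn n) (k : ℤ), Q = cube c ((2:ℝ) ^ k)) ∧
  (∀ Q ∈ 𝒟, ∀ R ∈ 𝒟, Q ∩ R = Q ∨ Q ∩ R = R ∨ Q ∩ R = ∅) ∧
  (∀ k : ℤ, (⋃ Q ∈ {Q | Q ∈ 𝒟 ∧ ∃ c : Rn n, Q = cube c ((2:ℝ) ^ k)}, Q) = univ)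

/-- The multilinear fractional maximal operator `ℳ_α`. -/
def MM (n m : ℕ) (α : ℝ) (g : Fin m → Rn n → ℝ≥0∞) (x : Rn n) : ℝ≥0∞ :=
  ⨆ (c : Rn n) (l : ℝ) (_ : 0 < l) (_ : x ∈ cube c l),
    ∏ i, (volume (cube c l) ^ (-(1 - α / ((m : ℝ) * (n : ℝ)))) * ∫⁻ y in cube c l, g i y)

/-- The multilinear fractional maximal operator restricted to a grid `𝒟`. -/
def MMD (n m : ℕ) (α : ℝ) (𝒟 : Set (Set (Rn n))) (g : Fin m → Rn n → ℝ≥0∞)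
    (x : Rn n) : ℝ≥0∞ :=
  ⨆ (Q : Set (Rn n)) (_ : Q ∈ 𝒟) (_ : x ∈ Q),
    ∏ i, (volume Q ^ (-(1 - α / ((m : ℝ) * (n : ℝ)))) * ∫⁻ y in Q, g i y)

/-- The bilinear fractional maximal operator `ℳ_α(g₁,g₂)`. -/
def M2 (n : ℕ) (α : ℝ) (g₁ g₂ : Rn n → ℝ≥0∞) (x : Rn n) : ℝ≥0∞ :=
  ⨆ (c : Rn n) (l : ℝ) (_ : 0 < l) (_ : x ∈ cube c l),
    (volume (cube c l) ^ (-(1 - α / (2 * (n : ℝ)))) * ∫⁻ y in cube c l, g₁ y) *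
      (volume (cube c l) ^ (-(1 - α / (2 * (n : ℝ)))) * ∫⁻ y in cube c l, g₂ y)

/-- The bilinear dyadic fractional maximal operator `ℳ^𝒟_α(g₁,g₂)`. -/
def M2D (n : ℕ) (α : ℝ) (𝒟 : Set (Set (Rn n))) (g₁ g₂ : Rn n → ℝ≥0∞) (x : Rn n) : ℝ≥0∞ :=
  ⨆ (Q : Set (Rn n)) (_ : Q ∈ 𝒟) (_ : x ∈ Q),
    (volume Q ^ (-(1 - α / (2 * (n : ℝ)))) * ∫⁻ y in Q, g₁ y) *
      (volume Q ^ (-(1 - α / (2 * (n : ℝ)))) * ∫⁻ y in Q, g₂ y)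

/-- Sawyer's bilinear testing constant `[w⃗,v]_{S_{P⃗,q}}`. -/
def sawyer2 (n : ℕ) (α p₁ p₂ q : ℝ) (σ₁ σ₂ v : Rn n → ℝ≥0∞) : ℝ≥0∞ :=
  ⨆ (c : Rn n) (l : ℝ) (_ : 0 < l),
    (∫⁻ x in cube c l,
        M2 n α ((cube c l).indicator σ₁) ((cube c l).indicator σ₂) x ^ q * v x) ^ (1/q) /
      (wtI σ₁ (cube c l) ^ (1/p₁) * wtI σ₂ (cube c l) ^ (1/p₂))

/-- Sawyer's multilinear testing constant. -/
def sawyerM (n m : ℕ) (α q : ℝ) (p : Fin m → ℝ) (σ : Fin m → Rn n → ℝ≥0∞)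
    (v : Rn n → ℝ≥0∞) : ℝ≥0∞ :=
  ⨆ (c : Rn n) (l : ℝ) (_ : 0 < l),
    (∫⁻ x in cube c l, MM n m α (fun i => (cube c l).indicator (σ i)) x ^ q * v x) ^ (1/q) /
      ∏ i, wtI (σ i) (cube c l) ^ (1 / p i)

/-- The principal cubes of `f` relative to `σ` inside `Qbar`, generation by generation. -/
def principalCubes {n : ℕ} (𝒟 : Set (Set (Rn n))) (σ f : Rn n → ℝ≥0∞)
    (Qbar : Set (Rn n)) : ℕ → Set (Set (Rn n))
  | 0 => {Qbar}
  | k + 1 => {G' | G' ∈ 𝒟 ∧ ∃ G ∈ principalCubes 𝒟 σ f Qbar k, G' ⊆ G ∧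
      4 * avgE σ f G < avgE σ f G' ∧
      ∀ G'' ∈ 𝒟, G' ⊆ G'' → G'' ⊆ G → 4 * avgE σ f G < avgE σ f G'' → G'' = G'}


lemma oneD (δ l a s : ℝ) (hδ : 0 < δ) (hl : 0 < l) (h3 : 3*l ≤ δ)
    (hs : s = 1 ∨ s = -1) :
    ∃ (t : ℝ) (m : ℤ), (t = 0 ∨ t = 1/3) ∧
      δ*((m:ℝ) + s*t) ≤ a ∧ a + l ≤ δ*((m:ℝ) + s*t + 1) := by
  set m : ℤ := ⌊a/δ⌋ with hm
  have h1 : (m:ℝ) ≤ a/δ := Int.floor_le _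
  have h2 : a/δ < (m:ℝ) + 1 := Int.lt_floor_add_one _
  have h1' : (m:ℝ) * δ ≤ a := (le_div_iff₀ hδ).mp h1
  have h2' : a < ((m:ℝ) + 1) * δ := (div_lt_iff₀ hδ).mp h2
  by_cases h : a + l ≤ ((m:ℝ) + 1) * δ
  · exact ⟨0, m, Or.inl rfl, by nlinarith, by nlinarith⟩
  · push_neg at h
    rcases hs with hs | hs
    · exact ⟨1/3, m, Or.inr rfl, by subst hs; nlinarith, by subst hs; nlinarith⟩
    · exact ⟨1/3, m + 1, Or.inr rfl, by subst hs; push_cast; nlinarith,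
        by subst hs; push_cast; nlinarith⟩

/-- for every cube there is a shifted dyadic cube containing it
with side length at most `6` times larger. -/
theorem stmt0 (n : ℕ) (c : Rn n) (l : ℝ) (hl : 0 < l) :
    ∃ t : Fin n → ℝ, (∀ i, t i = 0 ∨ t i = 1/3) ∧
      ∃ (k : ℤ) (m : Fin n → ℤ),
        cube c l ⊆ gridCube n k m t ∧ (2:ℝ) ^ (-k) ≤ 6 * l := by
  obtain ⟨j, hj1, hj2⟩ := exists_mem_Ico_zpow (x := 3*l) (y := (2:ℝ)) (by linarith) one_lt_two
  set k : ℤ := -(j+1) with hk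
  have hkj : -k = j + 1 := by omega
  set δ : ℝ := (2:ℝ) ^ (-k) with hδdef
  have hδ : 0 < δ := zpow_pos two_pos _
  have h3 : 3*l ≤ δ := by
    rw [hδdef, hkj]; exact le_of_lt hj2
  have h6 : δ ≤ 6 * l := by
    have : ((2:ℝ)) ^ (j+1) = 2 * 2 ^ j := by
      rw [zpow_add_one₀ (two_ne_zero)]; ring
    rw [hδdef, hkj, this]; linarith
  set s : ℝ := (-1:ℝ) ^ k with hsdef
  have hs : s = 1 ∨ s = -1 := by
    rcases Int.even_or_odd k with he | ho
    · exact Or.inl (he.neg_one_zpow)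
    · exact Or.inr (ho.neg_one_zpow)
  have H : ∀ i : Fin n, ∃ (t : ℝ) (m : ℤ), (t = 0 ∨ t = 1/3) ∧
      δ*((m:ℝ) + s*t) ≤ c i ∧ c i + l ≤ δ*((m:ℝ) + s*t + 1) :=
    fun i => oneD δ l (c i) s hδ hl h3 hs
  choose t m ht hle hlt using H
  refine ⟨t, ht, k, m, ?_, h6⟩
  intro x hx i
  obtain ⟨hx1, hx2⟩ := hx i
  constructor
  · calc (2:ℝ) ^ (-k) * ((m i : ℝ) + (-1:ℝ)^k * t i) = δ*((m i:ℝ) + s * t i) := rfl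
      _ ≤ c i := hle i
      _ ≤ x i := hx1
  · calc x i < c i + l := hx2
      _ ≤ δ*((m i:ℝ) + s * t i + 1) := hlt i
      _ = (2:ℝ) ^ (-k) * ((m i : ℝ) + (-1:ℝ)^k * t i + 1) := rfl
end
end

section
/- Each shifted dyadic grid 𝒟_t with t ∈ {0,1/3}ⁿ is a dyadic grid, i.e., (i) every cube in 𝒟_t has side length 2^k for some k ∈ ℤ; (ii) for any Q, R ∈ 𝒟_t, the intersection Q ∩ R is either Q, R, or empty; (iii) the cubes of each fixed side length 2^k form a partition of ℝⁿ. -/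
open MeasureTheory ENNReal Set
open scoped BigOperators

noncomputable section

lemma gridCube_eq_cube (n : ℕ) (k : ℤ) (m : Fin n → ℤ) (t : Fin n → ℝ) :
    gridCube n k m t
      = cube (fun i => (2:ℝ)^(-k) * ((m i : ℝ) + (-1:ℝ)^k * t i)) ((2:ℝ)^(-k)) := by
  ext x
  simp only [gridCube, cube, Set.mem_setOf_eq]
  refine forall_congr' fun i => and_congr Iff.rfl ?_
  rw [mul_add, mul_one]

lemma gridCube_disjoint (n : ℕ) (k : ℤ) (m m' : Fin n → ℤ) (t : Fin n → ℝ)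
    (h : m ≠ m') : Disjoint (gridCube n k m t) (gridCube n k m' t) := by
  rw [Set.disjoint_left]
  intro x hx hx'
  apply h
  funext i
  have l0 : (0:ℝ) < (2:ℝ)^(-k) := zpow_pos (by norm_num) _
  obtain ⟨h1, h2⟩ := hx i
  obtain ⟨h3, h4⟩ := hx' i
  have A : ((m i : ℝ) + (-1:ℝ)^k * t i) < ((m' i : ℝ) + (-1:ℝ)^k * t i + 1) :=
    (mul_lt_mul_iff_right₀ l0).mp (lt_of_le_of_lt h1 h4)
  have B : ((m' i : ℝ) + (-1:ℝ)^k * t i) < ((m i : ℝ) + (-1:ℝ)^k * t i + 1) :=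
    (mul_lt_mul_iff_right₀ l0).mp (lt_of_le_of_lt h3 h2)
  have A' : (m i : ℝ) < (m' i : ℝ) + 1 := by linarith
  have B' : (m' i : ℝ) < (m i : ℝ) + 1 := by linarith
  have A'' : m i < m' i + 1 := by exact_mod_cast A'
  have B'' : m' i < m i + 1 := by exact_mod_cast B'
  omega

lemma gridCube_cover (n : ℕ) (k : ℤ) (t : Fin n → ℝ) (x : Rn n) :
    x ∈ gridCube n k (fun i => ⌊x i * (2:ℝ)^k - (-1:ℝ)^k * t i⌋) t := by
  intro i
  have l0 : (0:ℝ) < (2:ℝ)^(-k) := zpow_pos (by norm_num) _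
  have key : (2:ℝ)^(-k) * (2:ℝ)^k = 1 := by
    rw [← zpow_add₀ (by norm_num : (2:ℝ) ≠ 0)]; simp
  have e : (2:ℝ)^(-k) * (x i * (2:ℝ)^k) = x i := by
    rw [mul_comm (x i), ← mul_assoc, key, one_mul]
  set s := (-1:ℝ)^k * t i with hs
  have h1 : (⌊x i * (2:ℝ)^k - s⌋ : ℝ) ≤ x i * (2:ℝ)^k - s := Int.floor_le _
  have h2 : x i * (2:ℝ)^k - s < ⌊x i * (2:ℝ)^k - s⌋ + 1 := Int.lt_floor_add_one _
  constructor
  · calc (2:ℝ)^(-k) * ((⌊x i * (2:ℝ)^k - s⌋ : ℝ) + s)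
        ≤ (2:ℝ)^(-k) * (x i * (2:ℝ)^k) := by
          apply mul_le_mul_of_nonneg_left (by linarith) l0.le
      _ = x i := e
  · calc x i = (2:ℝ)^(-k) * (x i * (2:ℝ)^k) := e.symm
      _ < (2:ℝ)^(-k) * ((⌊x i * (2:ℝ)^k - s⌋ : ℝ) + s + 1) := by
          apply (mul_lt_mul_iff_right₀ l0).mpr; linarith

lemma gridCube_nested (n : ℕ) (t : Fin n → ℝ) (ht : ∀ i, t i = 0 ∨ t i = 1/3)
    (k : ℤ) (m : Fin n → ℤ) :
    ∃ m', gridCube n (k+1) m t ⊆ gridCube n k m' t := by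
  have hs : ∀ i, ∃ sZ : ℤ, (sZ : ℝ) = 3 * ((-1:ℝ)^k * t i) := by
    intro i
    rcases ht i with h | h
    · exact ⟨0, by simp [h]⟩
    · rcases Int.even_or_odd k with hk | hk
      · exact ⟨1, by rw [h, hk.neg_one_zpow]; norm_num⟩
      · exact ⟨-1, by rw [h, hk.neg_one_zpow]; norm_num⟩
  choose sZ hsZ using hs
  refine ⟨fun i => (m i - sZ i) / 2, fun x hx i => ?_⟩
  have l0 : (0:ℝ) < (2:ℝ)^(-(k+1)) := zpow_pos (by norm_num) _
  have Leq : (2:ℝ)^(-k) = 2 * (2:ℝ)^(-(k+1)) := by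
    rw [show -k = -(k+1)+1 by ring, zpow_add_one₀ (by norm_num : (2:ℝ) ≠ 0)]
    ring
  have hneg : ((-1:ℝ))^(k+1) = -((-1:ℝ))^k := by
    rw [zpow_add_one₀ (by norm_num : (-1:ℝ) ≠ 0)]; ring
  obtain ⟨h1, h2⟩ := hx i
  have int1 : 2 * ((m i - sZ i) / 2) ≤ m i - sZ i := by omega
  have int2 : m i - sZ i - 1 ≤ 2 * ((m i - sZ i) / 2) := by omega
  have int1' : 2 * (((m i - sZ i) / 2 : ℤ) : ℝ) ≤ (m i : ℝ) - (sZ i : ℝ) := by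
    exact_mod_cast int1
  have int2' : (m i : ℝ) - (sZ i : ℝ) - 1 ≤ 2 * (((m i - sZ i) / 2 : ℤ) : ℝ) := by
    exact_mod_cast int2
  have hq := hsZ i
  constructor
  · calc (2:ℝ)^(-k) * ((((m i - sZ i) / 2 : ℤ) : ℝ) + (-1:ℝ)^k * t i)
        = (2:ℝ)^(-(k+1)) * (2 * (((m i - sZ i) / 2 : ℤ) : ℝ) + 2 * ((-1:ℝ)^k * t i)) := by
          rw [Leq]; ring
      _ ≤ (2:ℝ)^(-(k+1)) * ((m i : ℝ) + (-1:ℝ)^(k+1) * t i) := by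
          apply mul_le_mul_of_nonneg_left _ l0.le
          rw [hneg]; linarith
      _ ≤ x i := h1
  · calc x i < (2:ℝ)^(-(k+1)) * ((m i : ℝ) + (-1:ℝ)^(k+1) * t i + 1) := h2
      _ ≤ (2:ℝ)^(-(k+1)) * (2 * (((m i - sZ i) / 2 : ℤ) : ℝ) + 2 * ((-1:ℝ)^k * t i) + 2) := by
          apply mul_le_mul_of_nonneg_left _ l0.le
          rw [hneg]; linarith
      _ = (2:ℝ)^(-k) * ((((m i - sZ i) / 2 : ℤ) : ℝ) + (-1:ℝ)^k * t i + 1) := by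
          rw [Leq]; ring

lemma gridCube_nested_many (n : ℕ) (t : Fin n → ℝ) (ht : ∀ i, t i = 0 ∨ t i = 1/3) :
    ∀ (j : ℕ) (k : ℤ) (m : Fin n → ℤ),
      ∃ m', gridCube n (k + j) m t ⊆ gridCube n k m' t := by
  intro j
  induction j with
  | zero => exact fun k m => ⟨m, by simp⟩
  | succ j ih =>
    intro k m
    obtain ⟨m'', hm''⟩ := ih (k + 1) m
    obtain ⟨m', hm'⟩ := gridCube_nested n t ht k m''
    refine ⟨m', fun x hx => hm' (hm'' ?_)⟩
    have heq : k + ((j + 1 : ℕ) : ℤ) = k + 1 + (j : ℤ) := by push_cast; ring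
    rwa [heq] at hx

lemma gridCube_inter_cases (n : ℕ) (t : Fin n → ℝ) (ht : ∀ i, t i = 0 ∨ t i = 1/3)
    (k k' : ℤ) (m m' : Fin n → ℤ) (hkk' : k ≤ k') :
    gridCube n k m t ∩ gridCube n k' m' t = gridCube n k' m' t ∨
      gridCube n k m t ∩ gridCube n k' m' t = ∅ := by
  obtain ⟨j, hj⟩ : ∃ j : ℕ, k' = k + j := ⟨(k' - k).toNat, by omega⟩
  subst hj
  obtain ⟨m'', hsub⟩ := gridCube_nested_many n t ht j k m'
  by_cases h : m'' = m
  · left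
    subst h
    exact Set.inter_eq_right.mpr hsub
  · right
    have hdisj : Disjoint (gridCube n k m t) (gridCube n (k + j) m' t) :=
      (gridCube_disjoint n k m m'' t (Ne.symm h)).mono_right hsub
    exact Set.disjoint_iff_inter_eq_empty.mp hdisj

/-- each shifted dyadic grid `𝒟_t`, `t ∈ {0,1/3}ⁿ`, is a dyadic grid. -/
theorem stmt1 (n : ℕ) (t : Fin n → ℝ) (ht : ∀ i, t i = 0 ∨ t i = 1/3) :
    (∀ Q ∈ shiftedGrid n t, ∃ (k : ℤ) (c : Rn n), Q = cube c ((2:ℝ) ^ k)) ∧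
    (∀ Q ∈ shiftedGrid n t, ∀ R ∈ shiftedGrid n t,
      Q ∩ R = Q ∨ Q ∩ R = R ∨ Q ∩ R = ∅) ∧
    (∀ k : ℤ, (⋃ m : Fin n → ℤ, gridCube n k m t) = univ ∧
      Pairwise fun m m' : Fin n → ℤ =>
        Disjoint (gridCube n k m t) (gridCube n k m' t)) := by
  refine ⟨?_, ?_, ?_⟩
  · rintro Q ⟨k, m, rfl⟩
    exact ⟨-k, _, gridCube_eq_cube n k m t⟩
  · rintro Q ⟨k, m, rfl⟩ R ⟨k', m', rfl⟩
    rcases le_total k k' with hk | hk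
    · rcases gridCube_inter_cases n t ht k k' m m' hk with h | h
      · exact Or.inr (Or.inl h)
      · exact Or.inr (Or.inr h)
    · rcases gridCube_inter_cases n t ht k' k m' m hk with h | h
      · rw [Set.inter_comm] at h; exact Or.inl h
      · rw [Set.inter_comm] at h; exact Or.inr (Or.inr h)
  · intro k
    constructor
    · apply Set.eq_univ_of_forall
      intro x
      exact Set.mem_iUnion.mpr ⟨_, gridCube_cover n k t x⟩
    · exact fun m m' h => gridCube_disjoint n k m m' t h
end
end

section
/- (Calderón–Zygmund decomposition for the bilinear dyadic fractional maximal function) Let 0 ≤ α < 2n, g₁, g₂ nonnegative locally integrable functions, a = 2^{(2-α/n)(n+1)}, and Ω_k = {x : ℳ^𝒟_α(g₁,g₂)(x) > a^k}. Then Ω_k decomposes as a union of pairwise disjoint maximal dyadic cubes Q_j^k, each satisfying a^k < |Q_j^k|^{-(2-α/n)} (∫_{Q_j^k} g₁)(∫_{Q_j^k} g₂) ≤ 2^{2n-α} a^k, and the family {Q_j^k} is sparse. -/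
open MeasureTheory ENNReal Set
open scoped BigOperators

noncomputable section

lemma tsum_rpow_le {ι : Type*} (f : ι → ℝ≥0∞) {r : ℝ} (hr : 1 ≤ r) :
    ∑' i, f i ^ r ≤ (∑' i, f i) ^ r := by
  have h0 : (0:ℝ) ≤ r - 1 := by linarith
  have key : ∀ i, f i ^ r ≤ f i * (∑' j, f j) ^ (r - 1) := by
    intro i
    have : f i ^ r = f i ^ (1 + (r-1)) := by norm_num
    rw [this, ENNReal.rpow_add_of_nonneg _ _ zero_le_one h0, ENNReal.rpow_one]
    exact mul_le_mul_right (ENNReal.rpow_le_rpow (ENNReal.le_tsum i) h0) _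
  calc ∑' i, f i ^ r ≤ ∑' i, f i * (∑' j, f j) ^ (r - 1) := ENNReal.tsum_le_tsum key
    _ = (∑' i, f i) * (∑' j, f j) ^ (r - 1) := ENNReal.tsum_mul_right
    _ = (∑' i, f i) ^ r := by
        have h3 : (∑' i, f i) * (∑' i, f i) ^ (r - 1)
            = (∑' i, f i) ^ (1:ℝ) * (∑' i, f i) ^ (r - 1) := by rw [ENNReal.rpow_one]
        rw [h3, ← ENNReal.rpow_add_of_nonneg _ _ zero_le_one h0]
        norm_num

lemma rpow_tsum_le {ι : Type*} (f : ι → ℝ≥0∞) {s : ℝ} (hs0 : 0 < s) (hs1 : s ≤ 1) :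
    (∑' i, f i) ^ s ≤ ∑' i, f i ^ s := by
  have hr : 1 ≤ 1/s := by rw [le_div_iff₀ hs0]; linarith
  have h := tsum_rpow_le (fun i => f i ^ s) hr
  have h2 : ∀ i, (f i ^ s) ^ (1/s : ℝ) = f i := by
    intro i; rw [← ENNReal.rpow_mul]
    rw [show s * (1/s) = 1 by field_simp, ENNReal.rpow_one]
  simp only [h2] at h
  calc (∑' i, f i) ^ s ≤ ((∑' i, f i ^ s) ^ (1/s:ℝ)) ^ s := ENNReal.rpow_le_rpow h hs0.le
    _ = ∑' i, f i ^ s := by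
        rw [← ENNReal.rpow_mul, show (1/s) * s = 1 by field_simp, ENNReal.rpow_one]

lemma tsum_sqrt_mul_sqrt {ι : Type*} (f g : ι → ℝ≥0∞) :
    ∑' i, f i ^ (1/2:ℝ) * g i ^ (1/2:ℝ) ≤ (∑' i, f i) ^ (1/2:ℝ) * (∑' i, g i) ^ (1/2:ℝ) := by
  letI : MeasurableSpace ι := ⊤
  haveI : MeasurableSingletonClass ι := ⟨fun _ => trivial⟩
  have hconj : Real.HolderConjugate 2 2 := Real.HolderConjugate.two_two
  have hf : Measurable (fun i => f i ^ (1/2:ℝ)) := fun _ _ => trivial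
  have hg : Measurable (fun i => g i ^ (1/2:ℝ)) := fun _ _ => trivial
  have h := ENNReal.lintegral_mul_le_Lp_mul_Lq (Measure.count : Measure ι) hconj
    hf.aemeasurable hg.aemeasurable
  simp only [Pi.mul_apply, MeasureTheory.lintegral_count] at h
  have h2 : ∀ (F : ι → ℝ≥0∞), (fun i => (F i ^ (1/2:ℝ)) ^ (2:ℝ)) = F := by
    intro F; funext i; rw [← ENNReal.rpow_mul]; norm_num
  rw [h2 f, h2 g] at h
  simpa using h
/-! ### Auxiliary lemmas -/

section Aux

variable {n : ℕ}

lemma cube_eq_pi (c : Rn n) (l : ℝ) :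
    cube c l = Set.pi Set.univ (fun i => Set.Ico (c i) (c i + l)) := by
  ext x; simp [cube, Set.mem_pi, Set.mem_Ico]

lemma measurableSet_cube (c : Rn n) (l : ℝ) : MeasurableSet (cube c l) := by
  rw [cube_eq_pi]; exact MeasurableSet.univ_pi fun i => measurableSet_Ico

lemma volume_cube (c : Rn n) (l : ℝ) :
    volume (cube c l) = ENNReal.ofReal l ^ n := by
  rw [cube_eq_pi, volume_pi_pi]; simp [Real.volume_Ico]

lemma mem_cube_self {c : Rn n} {l : ℝ} (hl : 0 < l) : c ∈ cube c l :=
  fun i => ⟨le_refl _, by linarith⟩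

lemma volume_cube_rpow (c : Rn n) (j : ℤ) :
    volume (cube c ((2:ℝ) ^ j)) = (2:ℝ≥0∞) ^ ((j:ℝ) * n) := by
  rw [volume_cube]
  rw [show ((2:ℝ)^j) = (2:ℝ) ^ (j:ℝ) from (Real.rpow_intCast 2 j).symm]
  rw [← ENNReal.ofReal_rpow_of_pos (by norm_num : (0:ℝ) < 2)]
  rw [show ENNReal.ofReal 2 = 2 by norm_num]
  rw [← ENNReal.rpow_natCast ((2:ℝ≥0∞) ^ ((j:ℝ))) n, ← ENNReal.rpow_mul]

lemma two_rpow_ne_top {r : ℝ} : (2:ℝ≥0∞) ^ r ≠ ∞ := by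
  simp [ENNReal.rpow_eq_top_iff]

lemma two_rpow_ne_zero {r : ℝ} : (2:ℝ≥0∞) ^ r ≠ 0 := by
  simp [ENNReal.rpow_eq_zero_iff]

lemma two_rpow_pos {r : ℝ} : 0 < (2:ℝ≥0∞) ^ r :=
  ENNReal.rpow_pos (by norm_num) (by norm_num)

lemma two_rpow_lt_two_rpow {p q : ℝ} (h : p < q) : (2:ℝ≥0∞) ^ p < 2 ^ q :=
  ENNReal.rpow_lt_rpow_of_exponent_lt one_lt_two (by norm_num) h

lemma two_rpow_le_two_rpow {p q : ℝ} (h : p ≤ q) : (2:ℝ≥0∞) ^ p ≤ 2 ^ q :=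
  ENNReal.rpow_le_rpow_of_exponent_le one_le_two h

lemma two_rpow_inj {p q : ℝ} (h : (2:ℝ≥0∞) ^ p = 2 ^ q) : p = q := by
  by_contra hne
  rcases lt_or_gt_of_ne hne with h' | h'
  · exact absurd h (two_rpow_lt_two_rpow h').ne
  · exact absurd h.symm (two_rpow_lt_two_rpow h').ne

lemma two_rpow_mul_two_rpow (p q : ℝ) : (2:ℝ≥0∞) ^ p * 2 ^ q = 2 ^ (p + q) :=
  (ENNReal.rpow_add _ _ (by norm_num) (by norm_num)).symm

lemma cube_corner_eq {c c' : Rn n} {l : ℝ} (hl : 0 < l)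
    (h : cube c l ⊆ cube c' l) : c = c' := by
  have h1 : c ∈ cube c' l := h (mem_cube_self hl)
  funext i
  have h2 : ∀ ε : ℝ, 0 < ε → ε < l → c i + l - ε < c' i + l := by
    intro ε hε hεl
    have hx : Function.update c i (c i + l - ε) ∈ cube c l := by
      intro i'
      rcases eq_or_ne i' i with rfl | hne
      · simp only [Function.update_self]
        constructor <;> linarith
      · simp only [Function.update_of_ne hne]
        exact ⟨le_refl _, by linarith⟩
    have := (h hx) i
    simpa [Function.update_self] using this.2
  have hge : c' i ≤ c i := (h1 i).1
  have hle : c i ≤ c' i := by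
    by_contra hlt
    push_neg at hlt
    set ε := min ((c i - c' i)/2) (l/2) with hεdef
    have hε : 0 < ε := lt_min (by linarith) (by linarith)
    have hεl : ε < l := lt_of_le_of_lt (min_le_right _ _) (by linarith)
    have h3 := h2 ε hε hεl
    have h4 : ε ≤ (c i - c' i)/2 := min_le_left _ _
    linarith
  linarith

variable {𝒟 : Set (Set (Rn n))}

/-- Every grid cube has a corner, a scale, and volume `2^(j*n)`. -/
lemma grid_repr (hD : IsDyadicGrid 𝒟) {Q : Set (Rn n)} (hQ : Q ∈ 𝒟) :
    ∃ (c : Rn n) (j : ℤ), Q = cube c ((2:ℝ) ^ j) ∧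
      volume Q = (2:ℝ≥0∞) ^ ((j:ℝ) * n) := by
  obtain ⟨c, j, h⟩ := hD.1 Q hQ
  exact ⟨c, j, h, by rw [h, volume_cube_rpow]⟩

lemma grid_vol_pos (hD : IsDyadicGrid 𝒟) {Q : Set (Rn n)} (hQ : Q ∈ 𝒟) :
    volume Q ≠ 0 := by
  obtain ⟨c, j, -, hv⟩ := grid_repr hD hQ
  rw [hv]; exact two_rpow_ne_zero

lemma grid_vol_ne_top (hD : IsDyadicGrid 𝒟) {Q : Set (Rn n)} (hQ : Q ∈ 𝒟) :
    volume Q ≠ ∞ := by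
  obtain ⟨c, j, -, hv⟩ := grid_repr hD hQ
  rw [hv]; exact two_rpow_ne_top

lemma grid_measurable (hD : IsDyadicGrid 𝒟) {Q : Set (Rn n)} (hQ : Q ∈ 𝒟) :
    MeasurableSet Q := by
  obtain ⟨c, j, h, -⟩ := grid_repr hD hQ
  rw [h]; exact measurableSet_cube _ _

lemma grid_nonempty (hD : IsDyadicGrid 𝒟) {Q : Set (Rn n)} (hQ : Q ∈ 𝒟) :
    Q.Nonempty := by
  obtain ⟨c, j, h, -⟩ := grid_repr hD hQ
  exact ⟨c, h ▸ mem_cube_self (by positivity)⟩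

lemma grid_nested (hD : IsDyadicGrid 𝒟) {Q R : Set (Rn n)} (hQ : Q ∈ 𝒟) (hR : R ∈ 𝒟)
    (hne : (Q ∩ R).Nonempty) : Q ⊆ R ∨ R ⊆ Q := by
  rcases hD.2.1 Q hQ R hR with h | h | h
  · exact Or.inl (by rw [← h]; exact Set.inter_subset_right)
  · exact Or.inr (by rw [← h]; exact Set.inter_subset_left)
  · rw [h] at hne; exact absurd hne Set.not_nonempty_empty

/-- A grid cube containing a grid cube of at least the same volume equals it. -/
lemma grid_eq_of_subset_vol (hn : 0 < n) (hD : IsDyadicGrid 𝒟) {Q R : Set (Rn n)}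
    (hQ : Q ∈ 𝒟) (hR : R ∈ 𝒟) (hsub : Q ⊆ R) (hvol : volume R ≤ volume Q) : R = Q := by
  obtain ⟨c, j, hc, hv⟩ := grid_repr hD hQ
  obtain ⟨c', i, hc', hv'⟩ := grid_repr hD hR
  have hvQR : volume Q ≤ volume R := measure_mono hsub
  have heq : volume Q = volume R := le_antisymm hvQR hvol
  rw [hv, hv'] at heq
  have hji : (j:ℝ) * n = (i:ℝ) * n := two_rpow_inj heq
  have hji' : j = i := by
    have hn' : (n:ℝ) ≠ 0 := Nat.cast_ne_zero.mpr hn.ne'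
    exact_mod_cast mul_right_cancel₀ hn' hji
  subst hji'
  rw [hc, hc'] at hsub ⊢
  rw [cube_corner_eq (by positivity) hsub]

/-- Every point is contained in a grid cube of any given scale. -/
lemma grid_scale_cover (hD : IsDyadicGrid 𝒟) (x : Rn n) (j : ℤ) :
    ∃ Q ∈ 𝒟, x ∈ Q ∧ volume Q = (2:ℝ≥0∞) ^ ((j:ℝ) * n) := by
  have := hD.2.2 j
  have hx : x ∈ (⋃ Q ∈ {Q | Q ∈ 𝒟 ∧ ∃ c : Rn n, Q = cube c ((2:ℝ) ^ j)}, Q) := by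
    rw [this]; trivial
  obtain ⟨Q, hQ, hxQ⟩ := Set.mem_iUnion₂.mp hx
  obtain ⟨hQD, c, hc⟩ := hQ
  exact ⟨Q, hQD, hxQ, by rw [hc, volume_cube_rpow]⟩

/-- Among a nonempty family of grid cubes through a common point with bounded
volume, there is a largest one. -/
lemma exists_max_cube (hn : 0 < n) (hD : IsDyadicGrid 𝒟) {F : Set (Set (Rn n))}
    (hF : F ⊆ 𝒟) (hne : F.Nonempty) {x : Rn n} (hx : ∀ Q ∈ F, x ∈ Q)
    {V : ℝ≥0∞} (hV : V ≠ ∞) (hbdd : ∀ Q ∈ F, volume Q ≤ V) :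
    ∃ M ∈ F, ∀ Q ∈ F, Q ⊆ M := by
  obtain ⟨r, hr⟩ := ENNReal.exists_nat_gt hV
  -- the scales present in F
  set P : ℤ → Prop := fun j => ∃ Q ∈ F, volume Q = (2:ℝ≥0∞) ^ ((j:ℝ) * n) with hP
  have hinh : ∃ j, P j := by
    obtain ⟨Q, hQ⟩ := hne
    obtain ⟨c, j, -, hv⟩ := grid_repr hD (hF hQ)
    exact ⟨j, Q, hQ, hv⟩
  have hbddP : ∃ b : ℤ, ∀ j, P j → j ≤ b := by
    refine ⟨r, fun j hj => ?_⟩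
    obtain ⟨Q, hQ, hv⟩ := hj
    have h1 : (2:ℝ≥0∞) ^ ((j:ℝ) * n) ≤ V := hv ▸ hbdd Q hQ
    have h2 : (V : ℝ≥0∞) < 2 ^ ((r:ℝ)) := by
      refine lt_of_lt_of_le hr ?_
      calc ((r:ℕ) : ℝ≥0∞) ≤ ((2^r : ℕ) : ℝ≥0∞) := by
            exact_mod_cast (Nat.lt_two_pow_self (n := r)).le
        _ = (2:ℝ≥0∞) ^ (r:ℕ) := by push_cast; ring
        _ = (2:ℝ≥0∞) ^ ((r:ℝ)) := (ENNReal.rpow_natCast 2 r).symm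
    have h3 : (j:ℝ) * n < r := by
      by_contra hc
      push_neg at hc
      exact absurd (lt_of_le_of_lt h1 h2) (not_lt.mpr (two_rpow_le_two_rpow hc))
    have h4 : j * (n:ℤ) < (r:ℤ) := by exact_mod_cast h3
    by_contra hjr
    push_neg at hjr
    have hj0 : 0 < j := lt_of_lt_of_le (by positivity) hjr
    nlinarith [Int.natCast_pos.mpr hn]
  obtain ⟨jmax, hjmaxP, hjmax⟩ := Int.exists_greatest_of_bdd hbddP hinh
  obtain ⟨M, hM, hvM⟩ := hjmaxP
  refine ⟨M, hM, fun Q hQ => ?_⟩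
  obtain ⟨c, j, -, hv⟩ := grid_repr hD (hF hQ)
  have hjle : j ≤ jmax := hjmax j ⟨Q, hQ, hv⟩
  have hvle : volume Q ≤ volume M := by
    rw [hv, hvM]
    exact two_rpow_le_two_rpow (by
      have : (j:ℝ) ≤ jmax := by exact_mod_cast hjle
      nlinarith [Nat.cast_nonneg (α := ℝ) n])
  have hnest := grid_nested hD (hF hQ) (hF hM) ⟨x, hx Q hQ, hx M hM⟩
  rcases hnest with h | h
  · exact h
  · rw [grid_eq_of_subset_vol hn hD (hF hM) (hF hQ) h hvle]

end Aux
section Afun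

variable {n : ℕ}

/-- The quantity whose supremum defines `M2D`. -/
def Afun (n : ℕ) (α : ℝ) (g₁ g₂ : Rn n → ℝ≥0∞) (Q : Set (Rn n)) : ℝ≥0∞ :=
  (volume Q ^ (-(1 - α / (2 * (n : ℝ)))) * ∫⁻ y in Q, g₁ y) *
    (volume Q ^ (-(1 - α / (2 * (n : ℝ)))) * ∫⁻ y in Q, g₂ y)

variable {α : ℝ} {𝒟 : Set (Set (Rn n))} {g₁ g₂ : Rn n → ℝ≥0∞}

lemma M2D_eq (x : Rn n) :
    M2D n α 𝒟 g₁ g₂ x = ⨆ (Q : Set (Rn n)) (_ : Q ∈ 𝒟) (_ : x ∈ Q), Afun n α g₁ g₂ Q := rfl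

lemma Afun_le_M2D {Q : Set (Rn n)} (hQ : Q ∈ 𝒟) {x : Rn n} (hx : x ∈ Q) :
    Afun n α g₁ g₂ Q ≤ M2D n α 𝒟 g₁ g₂ x := by
  rw [M2D_eq]
  exact le_iSup_of_le Q (le_iSup_of_le hQ (le_iSup_of_le hx le_rfl))

lemma lt_M2D_iff {x : Rn n} {t : ℝ≥0∞} :
    t < M2D n α 𝒟 g₁ g₂ x ↔ ∃ Q ∈ 𝒟, x ∈ Q ∧ t < Afun n α g₁ g₂ Q := by
  rw [M2D_eq]
  simp only [lt_iSup_iff]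
  constructor
  · rintro ⟨Q, hQ, hx, h⟩; exact ⟨Q, hQ, hx, h⟩
  · rintro ⟨Q, hQ, hx, h⟩; exact ⟨Q, hQ, hx, h⟩

/-- Auxiliary: cancellation against a positive finite factor. -/
lemma lt_inv_mul_iff {c x y : ℝ≥0∞} (hc0 : c ≠ 0) (hct : c ≠ ∞) :
    x < c⁻¹ * y ↔ c * x < y := by
  rw [← ENNReal.mul_lt_mul_iff_right hc0 hct (b := x), ← mul_assoc,
    ENNReal.mul_inv_cancel hc0 hct, one_mul]

lemma ennreal_inv_mul_le_iff {c x y : ℝ≥0∞} (hc0 : c ≠ 0) (hct : c ≠ ∞) :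
    c⁻¹ * y ≤ x ↔ y ≤ c * x := by
  rw [← ENNReal.mul_le_mul_iff_right hc0 hct (b := c⁻¹ * y), ← mul_assoc,
    ENNReal.mul_inv_cancel hc0 hct, one_mul]

lemma le_inv_mul_iff {c x y : ℝ≥0∞} (hc0 : c ≠ 0) (hct : c ≠ ∞) :
    x ≤ c⁻¹ * y ↔ c * x ≤ y := by
  rw [← ENNReal.mul_le_mul_iff_right hc0 hct (b := x), ← mul_assoc,
    ENNReal.mul_inv_cancel hc0 hct, one_mul]

lemma Afun_eq_inv (hn : 0 < n) {Q : Set (Rn n)} (hv0 : volume Q ≠ 0) (hvt : volume Q ≠ ∞) :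
    Afun n α g₁ g₂ Q
      = (volume Q ^ ((2:ℝ) - α / n))⁻¹ * ((∫⁻ y in Q, g₁ y) * ∫⁻ y in Q, g₂ y) := by
  have hn' : (n:ℝ) ≠ 0 := Nat.cast_ne_zero.mpr hn.ne'
  unfold Afun
  rw [mul_mul_mul_comm, ← ENNReal.rpow_add _ _ hv0 hvt]
  rw [show -(1 - α / (2 * (n:ℝ))) + -(1 - α / (2 * (n:ℝ))) = -((2:ℝ) - α / n) by
    field_simp; ring]
  rw [ENNReal.rpow_neg]

lemma lam_lt_Afun_iff (hn : 0 < n) {Q : Set (Rn n)} (hv0 : volume Q ≠ 0)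
    (hvt : volume Q ≠ ∞) {lam : ℝ≥0∞} :
    lam < Afun n α g₁ g₂ Q ↔
      lam * volume Q ^ ((2:ℝ) - α / n) < (∫⁻ y in Q, g₁ y) * ∫⁻ y in Q, g₂ y := by
  have hβ0 : volume Q ^ ((2:ℝ) - α / n) ≠ 0 := by
    simp [ENNReal.rpow_eq_zero_iff, hv0, hvt]
  have hβt : volume Q ^ ((2:ℝ) - α / n) ≠ ∞ := by
    simp [ENNReal.rpow_eq_top_iff, hv0, hvt]
  rw [Afun_eq_inv hn hv0 hvt, lt_inv_mul_iff hβ0 hβt, mul_comm]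

lemma Afun_le_iff (hn : 0 < n) {Q : Set (Rn n)} (hv0 : volume Q ≠ 0)
    (hvt : volume Q ≠ ∞) {t : ℝ≥0∞} :
    Afun n α g₁ g₂ Q ≤ t ↔
      (∫⁻ y in Q, g₁ y) * (∫⁻ y in Q, g₂ y) ≤ volume Q ^ ((2:ℝ) - α / n) * t := by
  have hβ0 : volume Q ^ ((2:ℝ) - α / n) ≠ 0 := by
    simp [ENNReal.rpow_eq_zero_iff, hv0, hvt]
  have hβt : volume Q ^ ((2:ℝ) - α / n) ≠ ∞ := by
    simp [ENNReal.rpow_eq_top_iff, hv0, hvt]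
  rw [Afun_eq_inv hn hv0 hvt, ennreal_inv_mul_le_iff hβ0 hβt]

end Afun
section Cover

variable {n : ℕ} {α : ℝ} {𝒟 : Set (Set (Rn n))} {g₁ g₂ : Rn n → ℝ≥0∞}

/-- From a family of witness cubes inside `Q` covering `E`, extract a countable
pairwise disjoint subfamily of maximal witness cubes still covering `E`. -/
lemma exists_disjoint_cover (hn : 0 < n) (hD : IsDyadicGrid 𝒟) {Q E : Set (Rn n)}
    (hQ : Q ∈ 𝒟) {lam : ℝ≥0∞}
    (hcov : ∀ x ∈ E, ∃ W, W ∈ 𝒟 ∧ x ∈ W ∧ W ⊆ Q ∧ lam < Afun n α g₁ g₂ W) :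
    ∃ 𝔓 : Set (Set (Rn n)), 𝔓.Countable ∧ 𝒟 ⊇ 𝔓 ∧
      (∀ P ∈ 𝔓, P ⊆ Q ∧ lam < Afun n α g₁ g₂ P) ∧
      𝔓.PairwiseDisjoint id ∧ (∀ x ∈ E, ∃ P ∈ 𝔓, x ∈ P) := by
  have hmax : ∀ x ∈ E, ∃ M, (M ∈ 𝒟 ∧ x ∈ M ∧ M ⊆ Q ∧ lam < Afun n α g₁ g₂ M) ∧
      ∀ W, (W ∈ 𝒟 ∧ x ∈ W ∧ W ⊆ Q ∧ lam < Afun n α g₁ g₂ W) → W ⊆ M := by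
    intro x hx
    set F := {W | W ∈ 𝒟 ∧ x ∈ W ∧ W ⊆ Q ∧ lam < Afun n α g₁ g₂ W} with hF
    have h1 : F ⊆ 𝒟 := fun W hW => hW.1
    have h2 : F.Nonempty := by
      obtain ⟨W, hW⟩ := hcov x hx; exact ⟨W, hW⟩
    have h3 : ∀ W ∈ F, x ∈ W := fun W hW => hW.2.1
    have h4 : ∀ W ∈ F, volume W ≤ volume Q := fun W hW => measure_mono hW.2.2.1
    obtain ⟨M, hMF, hMmax⟩ := exists_max_cube hn hD h1 h2 h3 (grid_vol_ne_top hD hQ) h4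
    exact ⟨M, hMF, fun W hW => hMmax W hW⟩
  choose! M hM hMmax using hmax
  refine ⟨{P | ∃ x, ∃ _ : x ∈ E, P = M x}, ?_, ?_, ?_, ?_, ?_⟩
  case refine_2 => rintro P ⟨x, hx, rfl⟩; exact (hM x hx).1
  case refine_3 => rintro P ⟨x, hx, rfl⟩; exact ⟨(hM x hx).2.2.1, (hM x hx).2.2.2⟩
  case refine_4 =>
    rintro P₁ ⟨x, hx, rfl⟩ P₂ ⟨y, hy, rfl⟩ hne
    by_contra hdis
    rw [Set.not_disjoint_iff] at hdis
    obtain ⟨z, hz₁, hz₂⟩ := hdis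
    rcases grid_nested hD (hM x hx).1 (hM y hy).1 ⟨z, hz₁, hz₂⟩ with h | h
    · refine hne (le_antisymm h ?_)
      exact hMmax x hx (M y) ⟨(hM y hy).1, h (hM x hx).2.1, (hM y hy).2.2.1, (hM y hy).2.2.2⟩
    · refine hne (le_antisymm ?_ h)
      exact (hMmax y hy (M x) ⟨(hM x hx).1, h (hM y hy).2.1, (hM x hx).2.2.1,
        (hM x hx).2.2.2⟩)
  case refine_5 => intro x hx; exact ⟨M x, ⟨x, hx, rfl⟩, (hM x hx).2.1⟩
  -- countability
  case refine_1 =>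
    set 𝔓 : Set (Set (Rn n)) := {P | ∃ x, ∃ _ : x ∈ E, P = M x} with h𝔓
    have h𝒟' : 𝔓 ⊆ 𝒟 := by rintro P ⟨x, hx, rfl⟩; exact (hM x hx).1
    have hdisj : 𝔓.PairwiseDisjoint id := by
      rintro P₁ ⟨x, hx, rfl⟩ P₂ ⟨y, hy, rfl⟩ hne
      by_contra hdis
      rw [Set.not_disjoint_iff] at hdis
      obtain ⟨z, hz₁, hz₂⟩ := hdis
      rcases grid_nested hD (hM x hx).1 (hM y hy).1 ⟨z, hz₁, hz₂⟩ with h | h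
      · refine hne (le_antisymm h ?_)
        exact hMmax x hx (M y) ⟨(hM y hy).1, h (hM x hx).2.1, (hM y hy).2.2.1,
          (hM y hy).2.2.2⟩
      · refine hne (le_antisymm ?_ h)
        exact (hMmax y hy (M x) ⟨(hM x hx).1, h (hM y hy).2.1, (hM x hx).2.2.1,
          (hM x hx).2.2.2⟩)
    have hcnt := MeasureTheory.Measure.countable_meas_pos_of_disjoint_iUnion
      (μ := (volume : Measure (Rn n))) (As := fun P : ↥𝔓 => (P : Set (Rn n)))
      (fun P => grid_measurable hD (h𝒟' P.2))
      (fun i j hij => hdisj i.2 j.2 (fun h => hij (Subtype.ext h)))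
    have huniv : {i : ↥𝔓 | 0 < volume (i : Set (Rn n))} = Set.univ := by
      ext P; simp only [Set.mem_setOf_eq, Set.mem_univ, iff_true]
      exact pos_iff_ne_zero.mpr (grid_vol_pos hD (h𝒟' P.2))
    rw [huniv, Set.countable_univ_iff] at hcnt
    exact Set.countable_coe_iff.mp hcnt

lemma tsum_setLIntegral_le (hD : IsDyadicGrid 𝒟) {𝔓 : Set (Set (Rn n))}
    (hc : 𝔓.Countable) (h𝒟 : 𝔓 ⊆ 𝒟) (hdisj : 𝔓.PairwiseDisjoint id)
    {Q : Set (Rn n)} (hsub : ∀ P ∈ 𝔓, P ⊆ Q) {g : Rn n → ℝ≥0∞} (hg : Measurable g) :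
    ∑' P : ↥𝔓, ∫⁻ y in (P : Set (Rn n)), g y ≤ ∫⁻ y in Q, g y := by
  haveI := hc.to_subtype
  rw [← MeasureTheory.lintegral_iUnion (fun P : ↥𝔓 => grid_measurable hD (h𝒟 P.2))
    (fun i j hij => hdisj i.2 j.2 (fun h => hij (Subtype.ext h))) g]
  exact lintegral_mono_set (Set.iUnion_subset fun P => hsub P P.2)

end Cover
section MainLemmas

variable {n : ℕ} {α : ℝ} {𝒟 : Set (Set (Rn n))} {g₁ g₂ : Rn n → ℝ≥0∞}

lemma beta_pos (hn : 0 < n) (hα : α < 2*n) : 0 < 2 - α/(n:ℝ) := by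
  have hn' : (0:ℝ) < n := by exact_mod_cast hn
  rw [sub_pos, div_lt_iff₀ hn']
  exact_mod_cast (by push_cast; linarith : α < 2 * (n:ℝ))

lemma beta_le_two (hn : 0 < n) (hα0 : 0 ≤ α) : 2 - α/(n:ℝ) ≤ 2 := by
  have hn' : (0:ℝ) < n := by exact_mod_cast hn
  have : 0 ≤ α/(n:ℝ) := by positivity
  linarith

/-- The Cauchy–Schwarz/covering argument: if every point of a grid cube `Q` lies
in a witness subcube, then `Q` itself is a witness. -/
lemma lam_lt_Afun_of_cover (hn : 0 < n) (hα0 : 0 ≤ α) (hα : α < 2*n)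
    (hD : IsDyadicGrid 𝒟) (hg₁ : Measurable g₁) (hg₂ : Measurable g₂)
    (hg₁i : (∫⁻ x, g₁ x) ≠ ∞) (hg₂i : (∫⁻ x, g₂ x) ≠ ∞)
    {Q : Set (Rn n)} (hQ : Q ∈ 𝒟) {lam : ℝ≥0∞}
    (hcov : ∀ x ∈ Q, ∃ W, W ∈ 𝒟 ∧ x ∈ W ∧ W ⊆ Q ∧ lam < Afun n α g₁ g₂ W) :
    lam < Afun n α g₁ g₂ Q := by
  classical
  set β := 2 - α/(n:ℝ) with hβ
  have hβ0 : 0 < β := beta_pos hn hα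
  have hβ2 : β ≤ 2 := beta_le_two hn hα0
  obtain ⟨𝔓, hc, h𝒟, hprop, hdisj, hcov'⟩ := exists_disjoint_cover hn hD hQ hcov
  haveI := hc.to_subtype
  set f : ↥𝔓 → ℝ≥0∞ := fun P => ∫⁻ y in (P:Set (Rn n)), g₁ y with hf
  set g : ↥𝔓 → ℝ≥0∞ := fun P => ∫⁻ y in (P:Set (Rn n)), g₂ y with hg
  set v : ↥𝔓 → ℝ≥0∞ := fun P => volume (P:Set (Rn n)) with hv
  have hkey : ∀ P : ↥𝔓, lam * v P ^ β < f P * g P := fun P =>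
    (lam_lt_Afun_iff hn (grid_vol_pos hD (h𝒟 P.2)) (grid_vol_ne_top hD (h𝒟 P.2))).mp
      (hprop P P.2).2
  have hsplit : ∀ P : ↥𝔓, (lam * v P ^ β) ^ (1/2:ℝ)
      = lam ^ (1/2:ℝ) * v P ^ (β/2) := by
    intro P
    rw [ENNReal.mul_rpow_of_nonneg _ _ (by norm_num), ← ENNReal.rpow_mul, mul_one_div]
  have hsplit2 : ∀ P : ↥𝔓, (f P * g P) ^ (1/2:ℝ) = f P ^ (1/2:ℝ) * g P ^ (1/2:ℝ) :=
    fun P => ENNReal.mul_rpow_of_nonneg _ _ (by norm_num)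
  have h2 : ∀ P : ↥𝔓, lam ^ (1/2:ℝ) * v P ^ (β/2) ≤ f P ^ (1/2:ℝ) * g P ^ (1/2:ℝ) := by
    intro P
    rw [← hsplit P, ← hsplit2 P]
    exact ENNReal.rpow_le_rpow (hkey P).le (by norm_num)
  obtain ⟨x₀, hx₀⟩ := grid_nonempty hD hQ
  obtain ⟨P₀s, hP₀mem, hx₀P⟩ := hcov' x₀ hx₀
  set P₀ : ↥𝔓 := ⟨P₀s, hP₀mem⟩
  have h3 : lam ^ (1/2:ℝ) * v P₀ ^ (β/2) < f P₀ ^ (1/2:ℝ) * g P₀ ^ (1/2:ℝ) := by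
    rw [← hsplit P₀, ← hsplit2 P₀]
    exact ENNReal.rpow_lt_rpow (hkey P₀) (by norm_num)
  have hufin : (∫⁻ y in Q, g₁ y) ≠ ∞ :=
    ne_top_of_le_ne_top hg₁i (setLIntegral_le_lintegral _ _)
  have hvfin : (∫⁻ y in Q, g₂ y) ≠ ∞ :=
    ne_top_of_le_ne_top hg₂i (setLIntegral_le_lintegral _ _)
  have hS1 : ∑' P, f P ≤ ∫⁻ y in Q, g₁ y :=
    tsum_setLIntegral_le hD hc h𝒟 hdisj (fun P hP => (hprop P hP).1) hg₁
  have hS2 : ∑' P, g P ≤ ∫⁻ y in Q, g₂ y :=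
    tsum_setLIntegral_le hD hc h𝒟 hdisj (fun P hP => (hprop P hP).1) hg₂
  have hB : ∑' P, f P ^ (1/2:ℝ) * g P ^ (1/2:ℝ)
      ≤ (∫⁻ y in Q, g₁ y) ^ (1/2:ℝ) * (∫⁻ y in Q, g₂ y) ^ (1/2:ℝ) :=
    (tsum_sqrt_mul_sqrt f g).trans
      (mul_le_mul' (ENNReal.rpow_le_rpow hS1 (by norm_num))
        (ENNReal.rpow_le_rpow hS2 (by norm_num)))
  have hBfin : (∫⁻ y in Q, g₁ y) ^ (1/2:ℝ) * (∫⁻ y in Q, g₂ y) ^ (1/2:ℝ) ≠ ∞ :=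
    ENNReal.mul_ne_top (ENNReal.rpow_ne_top_of_nonneg (by norm_num) hufin)
      (ENNReal.rpow_ne_top_of_nonneg (by norm_num) hvfin)
  have hlt : ∑' P, lam ^ (1/2:ℝ) * v P ^ (β/2) < ∑' P, f P ^ (1/2:ℝ) * g P ^ (1/2:ℝ) :=
    ENNReal.tsum_lt_tsum (ne_top_of_le_ne_top hBfin
      ((ENNReal.tsum_le_tsum h2).trans hB)) h2 h3
  have hvolsum : volume Q ≤ ∑' P, v P := by
    refine (measure_mono ?_).trans (measure_iUnion_le _)
    intro x hx
    obtain ⟨P, hP, hxP⟩ := hcov' x hx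
    exact Set.mem_iUnion.mpr ⟨⟨P, hP⟩, hxP⟩
  have hA : lam ^ (1/2:ℝ) * volume Q ^ (β/2) ≤ ∑' P, lam ^ (1/2:ℝ) * v P ^ (β/2) := by
    rw [ENNReal.tsum_mul_left]
    refine mul_le_mul_right ?_ _
    refine (ENNReal.rpow_le_rpow hvolsum (half_pos hβ0).le).trans ?_
    exact rpow_tsum_le v (half_pos hβ0) ((div_le_one (by norm_num)).mpr hβ2)
  have hfinal : lam ^ (1/2:ℝ) * volume Q ^ (β/2)
      < (∫⁻ y in Q, g₁ y) ^ (1/2:ℝ) * (∫⁻ y in Q, g₂ y) ^ (1/2:ℝ) :=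
    lt_of_le_of_lt hA (lt_of_lt_of_le hlt hB)
  have hsq : ∀ (x : ℝ≥0∞) (t : ℝ), (x ^ t) ^ (2:ℕ) = x ^ (t*2) := by
    intro x t
    rw [← ENNReal.rpow_natCast (x ^ t) 2, ← ENNReal.rpow_mul]
    norm_num
  have hpow := ENNReal.pow_lt_pow_left (two_ne_zero) hfinal
  have e1 : (lam ^ (1/2:ℝ) * volume Q ^ (β/2)) ^ (2:ℕ) = lam * volume Q ^ β := by
    rw [mul_pow, hsq, hsq, show (1/2:ℝ)*2 = 1 by norm_num,
      show (β/2)*2 = β by ring, ENNReal.rpow_one]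
  have e2 : ((∫⁻ y in Q, g₁ y) ^ (1/2:ℝ) * (∫⁻ y in Q, g₂ y) ^ (1/2:ℝ)) ^ (2:ℕ)
      = (∫⁻ y in Q, g₁ y) * ∫⁻ y in Q, g₂ y := by
    rw [mul_pow, hsq, hsq, show (1/2:ℝ)*2 = 1 by norm_num,
      ENNReal.rpow_one, ENNReal.rpow_one]
  rw [e1, e2] at hpow
  exact (lam_lt_Afun_iff hn (grid_vol_pos hD hQ) (grid_vol_ne_top hD hQ)).mpr hpow

/-- The covering/summation bound on the measure of a set covered by witness
subcubes of `Q`. -/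
lemma vol_le_of_cover (hn : 0 < n) (hα0 : 0 ≤ α) (hα : α < 2*n)
    (hD : IsDyadicGrid 𝒟) (hg₁ : Measurable g₁) (hg₂ : Measurable g₂)
    {Q E : Set (Rn n)} (hQ : Q ∈ 𝒟) {lam : ℝ≥0∞} (hlam0 : lam ≠ 0) (hlamt : lam ≠ ∞)
    (hcov : ∀ x ∈ E, ∃ W, W ∈ 𝒟 ∧ x ∈ W ∧ W ⊆ Q ∧ lam < Afun n α g₁ g₂ W) :
    volume E ≤ (lam⁻¹ * ((∫⁻ y in Q, g₁ y) * ∫⁻ y in Q, g₂ y)) ^ (1/(2 - α/(n:ℝ))) := by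
  classical
  set β := 2 - α/(n:ℝ) with hβ
  have hβ0 : 0 < β := beta_pos hn hα
  have hβ2 : β ≤ 2 := beta_le_two hn hα0
  obtain ⟨𝔓, hc, h𝒟, hprop, hdisj, hcov'⟩ := exists_disjoint_cover hn hD hQ hcov
  haveI := hc.to_subtype
  set f : ↥𝔓 → ℝ≥0∞ := fun P => ∫⁻ y in (P:Set (Rn n)), g₁ y with hf
  set g : ↥𝔓 → ℝ≥0∞ := fun P => ∫⁻ y in (P:Set (Rn n)), g₂ y with hg
  set v : ↥𝔓 → ℝ≥0∞ := fun P => volume (P:Set (Rn n)) with hv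
  have hkey : ∀ P : ↥𝔓, lam * v P ^ β < f P * g P := fun P =>
    (lam_lt_Afun_iff hn (grid_vol_pos hD (h𝒟 P.2)) (grid_vol_ne_top hD (h𝒟 P.2))).mp
      (hprop P P.2).2
  -- each piece is controlled
  have hP : ∀ P : ↥𝔓, v P ≤ lam⁻¹ ^ (1/β)
      * (f P ^ (1/2:ℝ) * g P ^ (1/2:ℝ)) ^ (2/β) := by
    intro P
    have h1 : v P ^ β ≤ lam⁻¹ * (f P * g P) :=
      (le_inv_mul_iff hlam0 hlamt).mpr (hkey P).le
    have h2 : v P = (v P ^ β) ^ (1/β) := by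
      rw [← ENNReal.rpow_mul, mul_one_div, div_self hβ0.ne', ENNReal.rpow_one]
    rw [h2]
    refine (ENNReal.rpow_le_rpow h1 (one_div_pos.mpr hβ0).le).trans ?_
    rw [ENNReal.mul_rpow_of_nonneg _ _ (one_div_pos.mpr hβ0).le]
    refine mul_le_mul_right (le_of_eq ?_) _
    rw [← ENNReal.mul_rpow_of_nonneg _ _ (by norm_num : (0:ℝ) ≤ 1/2),
      ← ENNReal.rpow_mul]
    congr 1
    rw [div_mul_div_comm, one_mul, ← div_div]
    norm_num
  have hvolE : volume E ≤ ∑' P, v P := by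
    refine (measure_mono ?_).trans (measure_iUnion_le _)
    intro x hx
    obtain ⟨P, hPm, hxP⟩ := hcov' x hx
    exact Set.mem_iUnion.mpr ⟨⟨P, hPm⟩, hxP⟩
  have hr : (1:ℝ) ≤ 2/β := (one_le_div hβ0).mpr hβ2
  have hS1 : ∑' P, f P ≤ ∫⁻ y in Q, g₁ y :=
    tsum_setLIntegral_le hD hc h𝒟 hdisj (fun P hP => (hprop P hP).1) hg₁
  have hS2 : ∑' P, g P ≤ ∫⁻ y in Q, g₂ y :=
    tsum_setLIntegral_le hD hc h𝒟 hdisj (fun P hP => (hprop P hP).1) hg₂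
  calc volume E ≤ ∑' P, v P := hvolE
    _ ≤ ∑' P, lam⁻¹ ^ (1/β) * (f P ^ (1/2:ℝ) * g P ^ (1/2:ℝ)) ^ (2/β) :=
        ENNReal.tsum_le_tsum hP
    _ = lam⁻¹ ^ (1/β) * ∑' P, (f P ^ (1/2:ℝ) * g P ^ (1/2:ℝ)) ^ (2/β) :=
        ENNReal.tsum_mul_left
    _ ≤ lam⁻¹ ^ (1/β) * (∑' P, f P ^ (1/2:ℝ) * g P ^ (1/2:ℝ)) ^ (2/β) :=
        mul_le_mul_right (tsum_rpow_le _ hr) _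
    _ ≤ lam⁻¹ ^ (1/β)
        * ((∫⁻ y in Q, g₁ y) ^ (1/2:ℝ) * (∫⁻ y in Q, g₂ y) ^ (1/2:ℝ)) ^ (2/β) := by
        refine mul_le_mul_right (ENNReal.rpow_le_rpow ?_ (div_pos two_pos hβ0).le) _
        exact (tsum_sqrt_mul_sqrt f g).trans
          (mul_le_mul' (ENNReal.rpow_le_rpow hS1 (by norm_num))
            (ENNReal.rpow_le_rpow hS2 (by norm_num)))
    _ = (lam⁻¹ * ((∫⁻ y in Q, g₁ y) * ∫⁻ y in Q, g₂ y)) ^ (1/β) := by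
        rw [ENNReal.mul_rpow_of_nonneg _ _ (one_div_pos.mpr hβ0).le]
        congr 1
        rw [← ENNReal.mul_rpow_of_nonneg _ _ (by norm_num : (0:ℝ) ≤ 1/2),
          ← ENNReal.rpow_mul]
        congr 1
        rw [div_mul_div_comm, one_mul, ← div_div]
        norm_num
end MainLemmas

/-- Calderón–Zygmund decomposition of the superlevel sets of the
bilinear dyadic fractional maximal function into maximal dyadic cubes, forming
a sparse family with the two-sided average bounds. -/
theorem stmt5 (n : ℕ) (hn : 0 < n) (α : ℝ) (hα0 : 0 ≤ α) (hα : α < 2 * n)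
    (𝒟 : Set (Set (Rn n))) (hD : IsDyadicGrid 𝒟)
    (g₁ g₂ : Rn n → ℝ≥0∞) (hg₁ : Measurable g₁) (hg₂ : Measurable g₂)
    (hg₁i : (∫⁻ x, g₁ x) ≠ ∞) (hg₂i : (∫⁻ x, g₂ x) ≠ ∞) :
    let a : ℝ≥0∞ := 2 ^ (((2:ℝ) - α / n) * ((n:ℝ) + 1))
    let Ω : ℤ → Set (Rn n) := fun k => {x | a ^ k < M2D n α 𝒟 g₁ g₂ x}
    let S : ℤ → Set (Set (Rn n)) := fun k =>
      {Q | Q ∈ 𝒟 ∧ Q ⊆ Ω k ∧ ∀ R ∈ 𝒟, Q ⊆ R → R ⊆ Ω k → R = Q}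
    (∀ k : ℤ, Ω k = ⋃ Q ∈ S k, Q) ∧
    (∀ k : ℤ, ∀ Q ∈ S k,
      a ^ k < volume Q ^ (α / (n:ℝ) - 2) * (∫⁻ y in Q, g₁ y) * (∫⁻ y in Q, g₂ y) ∧
      volume Q ^ (α / (n:ℝ) - 2) * (∫⁻ y in Q, g₁ y) * (∫⁻ y in Q, g₂ y)
        ≤ 2 ^ (2 * (n:ℝ) - α) * a ^ k) ∧
    (∀ k : ℤ, ∀ Q ∈ S k, ∀ R ∈ S k, Q ≠ R → Disjoint Q R) ∧
    (∀ k : ℤ, Ω (k+1) ⊆ Ω k) ∧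
    (∀ k : ℤ, ∀ Q ∈ S k, volume (Ω (k+1) ∩ Q) ≤ volume Q / 2) := by
  classical
  intro a Ω S
  have hn' : (0:ℝ) < n := by exact_mod_cast hn
  have hnne : (n:ℝ) ≠ 0 := hn'.ne'
  have hβ0 : 0 < 2 - α/(n:ℝ) := beta_pos hn hα
  have hβ2 : 2 - α/(n:ℝ) ≤ 2 := beta_le_two hn hα0
  have hβn : ((2:ℝ) - α/(n:ℝ)) * n = 2 * (n:ℝ) - α := by field_simp
  -- powers of `a`
  have hak : ∀ k : ℤ, a ^ k = (2:ℝ≥0∞) ^ ((((2:ℝ) - α/(n:ℝ)) * ((n:ℝ)+1)) * (k:ℝ)) := by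
    intro k
    have h1 : a = (2:ℝ≥0∞) ^ (((2:ℝ) - α/(n:ℝ)) * ((n:ℝ)+1)) := rfl
    rw [h1, ← ENNReal.rpow_intCast ((2:ℝ≥0∞) ^ (((2:ℝ) - α/(n:ℝ)) * ((n:ℝ)+1))) k,
      ← ENNReal.rpow_mul]
  have hak0 : ∀ k : ℤ, a ^ k ≠ 0 := fun k => by rw [hak k]; exact two_rpow_ne_zero
  have hakt : ∀ k : ℤ, a ^ k ≠ ∞ := fun k => by rw [hak k]; exact two_rpow_ne_top
  have hmono : ∀ k : ℤ, a ^ k ≤ a ^ (k+1) := by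
    intro k
    rw [hak k, hak (k+1)]
    apply two_rpow_le_two_rpow
    have he0 : 0 ≤ ((2:ℝ) - α/(n:ℝ)) * ((n:ℝ)+1) := by nlinarith
    have : ((k+1:ℤ):ℝ) = (k:ℝ) + 1 := by push_cast; ring
    rw [this]
    nlinarith
  -- basic membership facts
  have hΩmono : ∀ k : ℤ, Ω (k+1) ⊆ Ω k := by
    intro k x hx
    exact lt_of_le_of_lt (hmono k) hx
  have hwit_sub : ∀ (k:ℤ) (R : Set (Rn n)), R ∈ 𝒟 → a ^ k < Afun n α g₁ g₂ R →
      R ⊆ Ω k := by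
    intro k R hR h y hy
    exact lt_of_lt_of_le h (Afun_le_M2D hR hy)
  have hkey : ∀ (k:ℤ) (Q : Set (Rn n)), Q ∈ 𝒟 → Q ⊆ Ω k →
      ∃ R, R ∈ 𝒟 ∧ Q ⊆ R ∧ a ^ k < Afun n α g₁ g₂ R := by
    intro k Q hQ hsub
    by_cases hc : ∀ x ∈ Q, ∃ W, W ∈ 𝒟 ∧ x ∈ W ∧ W ⊆ Q ∧ a ^ k < Afun n α g₁ g₂ W
    · exact ⟨Q, hQ, subset_rfl,
        lam_lt_Afun_of_cover hn hα0 hα hD hg₁ hg₂ hg₁i hg₂i hQ hc⟩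
    · push_neg at hc
      obtain ⟨x, hxQ, hx⟩ := hc
      have hxΩ : x ∈ Ω k := hsub hxQ
      obtain ⟨W, hW, hxW, hAW⟩ := lt_M2D_iff.mp hxΩ
      rcases grid_nested hD hW hQ ⟨x, hxW, hxQ⟩ with h | h
      · exact absurd hAW (not_lt.mpr (hx W hW hxW h))
      · exact ⟨W, hW, h, hAW⟩
  have hVk : ∀ (k:ℤ) (R : Set (Rn n)), R ∈ 𝒟 → a ^ k < Afun n α g₁ g₂ R →
      volume R ≤ ((a^k)⁻¹ * ((∫⁻ x, g₁ x) * ∫⁻ x, g₂ x)) ^ (1/(2 - α/(n:ℝ))) := by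
    intro k R hR hA
    have h1 := (lam_lt_Afun_iff hn (grid_vol_pos hD hR) (grid_vol_ne_top hD hR)).mp hA
    have h2 : a^k * volume R ^ ((2:ℝ) - α/(n:ℝ)) ≤ (∫⁻ x, g₁ x) * ∫⁻ x, g₂ x :=
      h1.le.trans (mul_le_mul' (setLIntegral_le_lintegral _ _)
        (setLIntegral_le_lintegral _ _))
    have h3 : volume R ^ ((2:ℝ) - α/(n:ℝ)) ≤ (a^k)⁻¹ * ((∫⁻ x, g₁ x) * ∫⁻ x, g₂ x) :=
      (le_inv_mul_iff (hak0 k) (hakt k)).mpr h2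
    have h4 : volume R = (volume R ^ ((2:ℝ)-α/(n:ℝ))) ^ (1/(2-α/(n:ℝ))) := by
      rw [← ENNReal.rpow_mul, mul_one_div, div_self hβ0.ne', ENNReal.rpow_one]
    rw [h4]
    exact ENNReal.rpow_le_rpow h3 (one_div_pos.mpr hβ0).le
  have hVkt : ∀ k : ℤ, ((a^k)⁻¹ * ((∫⁻ x, g₁ x) * ∫⁻ x, g₂ x)) ^ (1/(2 - α/(n:ℝ))) ≠ ∞ :=
    fun k => ENNReal.rpow_ne_top_of_nonneg (one_div_pos.mpr hβ0).le
      (ENNReal.mul_ne_top (ENNReal.inv_ne_top.mpr (hak0 k)) (ENNReal.mul_ne_top hg₁i hg₂i))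
  have hmaximal : ∀ (k:ℤ) (Q : Set (Rn n)), Q ∈ 𝒟 → Q ⊆ Ω k →
      ∃ M, M ∈ S k ∧ Q ⊆ M := by
    intro k Q hQ hsub
    set F : Set (Set (Rn n)) := {R | R ∈ 𝒟 ∧ Q ⊆ R ∧ R ⊆ Ω k} with hF
    have hF𝒟 : F ⊆ 𝒟 := fun R hR => hR.1
    have hFne : F.Nonempty := ⟨Q, hQ, subset_rfl, hsub⟩
    obtain ⟨x₀, hx₀⟩ := grid_nonempty hD hQ
    have hx : ∀ R ∈ F, x₀ ∈ R := fun R hR => hR.2.1 hx₀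
    have hbdd : ∀ R ∈ F, volume R ≤
        ((a^k)⁻¹ * ((∫⁻ x, g₁ x) * ∫⁻ x, g₂ x)) ^ (1/(2 - α/(n:ℝ))) := by
      intro R hR
      obtain ⟨R', hR', hRR', hA⟩ := hkey k R hR.1 hR.2.2
      exact (measure_mono hRR').trans (hVk k R' hR' hA)
    obtain ⟨M, hMF, hMmax⟩ := exists_max_cube hn hD hF𝒟 hFne hx (hVkt k) hbdd
    refine ⟨M, ⟨hMF.1, hMF.2.2, fun R hR hMR hRΩ => ?_⟩, hMF.2.1⟩
    exact Set.Subset.antisymm (hMmax R ⟨hR, hMF.2.1.trans hMR, hRΩ⟩) hMR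
  have hlower : ∀ (k:ℤ) (Q : Set (Rn n)), Q ∈ S k → a ^ k < Afun n α g₁ g₂ Q := by
    intro k Q hQS
    obtain ⟨R, hR, hQR, hA⟩ := hkey k Q hQS.1 hQS.2.1
    have hRQ : R = Q := hQS.2.2 R hR hQR (hwit_sub k R hR hA)
    rwa [hRQ] at hA
  have hupper : ∀ (k:ℤ) (Q : Set (Rn n)), Q ∈ S k →
      Afun n α g₁ g₂ Q ≤ 2 ^ (2 * (n:ℝ) - α) * a ^ k := by
    intro k Q hQS
    obtain ⟨c, j, hcube, hvQ⟩ := grid_repr hD hQS.1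
    obtain ⟨Pp, hPp, hcP, hvP⟩ := grid_scale_cover hD c (j+1)
    have hcQ : c ∈ Q := by rw [hcube]; exact mem_cube_self (by positivity)
    have hvlt : volume Q < volume Pp := by
      rw [hvQ, hvP]
      apply two_rpow_lt_two_rpow
      have : ((j+1:ℤ):ℝ) = (j:ℝ) + 1 := by push_cast; ring
      rw [this]; nlinarith
    have hQP : Q ⊆ Pp := by
      rcases grid_nested hD hQS.1 hPp ⟨c, hcQ, hcP⟩ with h | h
      · exact h
      · exact absurd (measure_mono h) (not_le.mpr hvlt)
    have hPne : Pp ≠ Q := by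
      intro h
      rw [h] at hvlt
      exact lt_irrefl _ hvlt
    have hPnotΩ : ¬ (Pp ⊆ Ω k) := fun h => hPne (hQS.2.2 Pp hPp hQP h)
    obtain ⟨y, hyP, hyΩ⟩ := Set.not_subset.mp hPnotΩ
    have hAP : Afun n α g₁ g₂ Pp ≤ a^k :=
      le_trans (Afun_le_M2D hPp hyP) (not_lt.mp hyΩ)
    rw [Afun_le_iff hn (grid_vol_pos hD hPp) (grid_vol_ne_top hD hPp)] at hAP
    rw [Afun_le_iff hn (grid_vol_pos hD hQS.1) (grid_vol_ne_top hD hQS.1)]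
    refine le_trans (mul_le_mul' (lintegral_mono_set hQP) (lintegral_mono_set hQP))
      (le_trans hAP ?_)
    rw [hvQ, hvP, ← ENNReal.rpow_mul, ← ENNReal.rpow_mul, ← mul_assoc,
      two_rpow_mul_two_rpow]
    apply le_of_eq
    congr 1
    push_cast
    field_simp
  -- the representation of the two-sided bound
  have hrepr : ∀ (Q : Set (Rn n)), Q ∈ 𝒟 →
      volume Q ^ (α / (n:ℝ) - 2) * (∫⁻ y in Q, g₁ y) * (∫⁻ y in Q, g₂ y)
        = Afun n α g₁ g₂ Q := by
    intro Q hQ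
    rw [Afun_eq_inv hn (grid_vol_pos hD hQ) (grid_vol_ne_top hD hQ),
      show α/(n:ℝ) - 2 = -((2:ℝ) - α/(n:ℝ)) by ring, ENNReal.rpow_neg, mul_assoc]
  refine ⟨?_, ?_, ?_, ?_, ?_⟩
  · -- part 1
    intro k
    ext x
    simp only [Set.mem_iUnion]
    constructor
    · intro hx
      obtain ⟨W, hW, hxW, hAW⟩ := lt_M2D_iff.mp hx
      obtain ⟨M, hMS, hWM⟩ := hmaximal k W hW (hwit_sub k W hW hAW)
      exact ⟨M, hMS, hWM hxW⟩
    · rintro ⟨Q, hQS, hxQ⟩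
      exact hQS.2.1 hxQ
  · -- part 2
    intro k Q hQS
    rw [hrepr Q hQS.1]
    exact ⟨hlower k Q hQS, hupper k Q hQS⟩
  · -- part 3
    intro k Q hQ R hR hne
    by_contra hdis
    rw [Set.not_disjoint_iff] at hdis
    obtain ⟨z, hz₁, hz₂⟩ := hdis
    rcases grid_nested hD hQ.1 hR.1 ⟨z, hz₁, hz₂⟩ with h | h
    · exact hne (hQ.2.2 R hR.1 h hR.2.1).symm
    · exact hne (hR.2.2 Q hQ.1 h hQ.2.1)
  · -- part 4
    exact hΩmono
  · -- part 5
    intro k Q hQS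
    have hcov : ∀ x ∈ Ω (k+1) ∩ Q, ∃ W, W ∈ 𝒟 ∧ x ∈ W ∧ W ⊆ Q ∧
        a ^ (k+1) < Afun n α g₁ g₂ W := by
      rintro x ⟨hxΩ, hxQ⟩
      obtain ⟨W, hW, hxW, hAW⟩ := lt_M2D_iff.mp hxΩ
      rcases grid_nested hD hW hQS.1 ⟨x, hxW, hxQ⟩ with h | h
      · exact ⟨W, hW, hxW, h, hAW⟩
      · exfalso
        have hWΩ : W ⊆ Ω k := (hwit_sub (k+1) W hW hAW).trans (hΩmono k)
        have hWQ : W = Q := hQS.2.2 W hW h hWΩ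
        rw [hWQ] at hAW
        have h1 : Afun n α g₁ g₂ Q ≤ 2 ^ (2 * (n:ℝ) - α) * a ^ k := hupper k Q hQS
        have h2 : (2:ℝ≥0∞) ^ (2 * (n:ℝ) - α) * a ^ k ≤ a ^ (k+1) := by
          rw [hak k, hak (k+1), two_rpow_mul_two_rpow]
          apply two_rpow_le_two_rpow
          have hcast : ((k+1:ℤ):ℝ) = (k:ℝ) + 1 := by push_cast; ring
          rw [hcast]
          nlinarith [hβ0, hβn]
        exact absurd (hAW.trans_le (h1.trans h2)) (lt_irrefl _)
    have hb := vol_le_of_cover hn hα0 hα hD hg₁ hg₂ hQS.1 (hak0 (k+1)) (hakt (k+1)) hcov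
    have hup := hupper k Q hQS
    rw [Afun_le_iff hn (grid_vol_pos hD hQS.1) (grid_vol_ne_top hD hQS.1)] at hup
    obtain ⟨c, j, hcube, hvQ⟩ := grid_repr hD hQS.1
    calc volume (Ω (k+1) ∩ Q)
        ≤ ((a^(k+1))⁻¹ * ((∫⁻ y in Q, g₁ y) * ∫⁻ y in Q, g₂ y)) ^ (1/(2 - α/(n:ℝ))) := hb
      _ ≤ ((a^(k+1))⁻¹ * (volume Q ^ ((2:ℝ) - α/(n:ℝ))
            * (2 ^ (2 * (n:ℝ) - α) * a ^ k))) ^ (1/(2 - α/(n:ℝ))) := by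
          exact ENNReal.rpow_le_rpow (mul_le_mul_right hup _) (one_div_pos.mpr hβ0).le
      _ = volume Q / 2 := by
          rw [hak k, hak (k+1), hvQ, ← ENNReal.rpow_mul, ← ENNReal.rpow_neg,
            two_rpow_mul_two_rpow, two_rpow_mul_two_rpow, two_rpow_mul_two_rpow,
            ← ENNReal.rpow_mul]
          rw [show (-((((2:ℝ) - α/(n:ℝ)) * ((n:ℝ)+1)) * ((k:ℤ)+1:ℤ))
              + ((j:ℝ) * n * ((2:ℝ) - α/(n:ℝ)) + (2 * (n:ℝ) - α
              + (((2:ℝ) - α/(n:ℝ)) * ((n:ℝ)+1)) * (k:ℝ)))) * (1/(2 - α/(n:ℝ)))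
              = (j:ℝ) * n + (-1) from by
            push_cast
            rw [← hβn, mul_one_div, div_eq_iff hβ0.ne']
            ring]
          rw [← two_rpow_mul_two_rpow, ENNReal.rpow_neg_one, ← hvQ,
            div_eq_mul_inv]
end
end
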